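/- Let X be a compact Hausdorff topological space, (ι, ≤) a nonempty directed set, and M > 0. Let (μ_j)_{j∈ι} be a net of Borel measures on X with μ_j(X) ≤ M for all j, converging weakly to a finite Borel measure μ (i.e. ∫ g dμ_j → ∫ g dμ along atTop for every continuous g : X → ℝ). Let h : X → ℝ be a bounded Borel measurable function with the following property: for every ε > 0 there exists an open set G ⊆ X such that the restriction of h to X∖G is continuous, μ_j(G) ≤ ε for every j ∈ ι, and μ(G) ≤ ε. Then ∫_X h dμ_j → ∫_X h dμ along the atTop filter on ι. -/

import Mathlib

open Filter MeasureTheory Set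

lemma key_integral_diff {X : Type*} [TopologicalSpace X] [MeasurableSpace X] [BorelSpace X]
    (ν : Measure X) [IsFiniteMeasure ν] (h g : X → ℝ)
    (hh : Integrable h ν) (hg : Integrable g ν) (G : Set X)
    (heq : ∀ x ∉ G, h x = g x) (C δ : ℝ) (hC0 : 0 ≤ C)
    (hC : ∀ x, |h x - g x| ≤ C) (hδ : 0 ≤ δ) (hν : ν G ≤ ENNReal.ofReal δ) :
    |∫ x, h x ∂ν - ∫ x, g x ∂ν| ≤ C * δ := by
  rw [← integral_sub hh hg]
  have h0 : ∀ x ∉ G, h x - g x = 0 := fun x hx => by rw [heq x hx]; ring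
  rw [← setIntegral_eq_integral_of_forall_compl_eq_zero h0]
  have hlt : ν G < ⊤ := lt_of_le_of_lt hν ENNReal.ofReal_lt_top
  have := norm_setIntegral_le_of_norm_le_const (μ := ν) (s := G) (f := fun x => h x - g x)
    hlt (fun x _ => by simpa using hC x)
  refine le_trans this ?_
  have htr : (ν G).toReal ≤ δ := ENNReal.toReal_le_of_le_ofReal hδ hν
  exact mul_le_mul_of_nonneg_left htr hC0

/-- convergence of integrals of a bounded quasicontinuous function
against a weakly converging net of measures of uniformly bounded mass. -/
theorem stmt2
    {X : Type*} [TopologicalSpace X] [CompactSpace X] [T2Space X]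
    [MeasurableSpace X] [BorelSpace X]
    {ι : Type*} [Preorder ι] [Nonempty ι] [IsDirected ι (· ≤ ·)]
    (M : ℝ) (hM : 0 < M)
    (μ : ι → Measure X) (hμM : ∀ j, μ j Set.univ ≤ ENNReal.ofReal M)
    (μlim : Measure X) [IsFiniteMeasure μlim]
    (hweak : ∀ g : C(X, ℝ),
      Tendsto (fun j => ∫ x, g x ∂(μ j)) atTop (nhds (∫ x, g x ∂μlim)))
    (h : X → ℝ) (hmeas : Measurable h) (hbdd : ∃ C, ∀ x, |h x| ≤ C)
    (hquasi : ∀ ε : ℝ, 0 < ε → ∃ G : Set X, IsOpen G ∧ ContinuousOn h Gᶜ ∧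
      (∀ j, μ j G ≤ ENNReal.ofReal ε) ∧ μlim G ≤ ENNReal.ofReal ε) :
    Tendsto (fun j => ∫ x, h x ∂(μ j)) atTop (nhds (∫ x, h x ∂μlim)) := by
  haveI : ∀ j, IsFiniteMeasure (μ j) := fun j =>
    ⟨lt_of_le_of_lt (hμM j) ENNReal.ofReal_lt_top⟩
  obtain ⟨C₀, hC₀⟩ := hbdd
  set C : ℝ := max C₀ 0 with hCdef
  have hC0 : 0 ≤ C := le_max_right _ _
  have hC : ∀ x, |h x| ≤ C := fun x => (hC₀ x).trans (le_max_left _ _)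
  have hInth : ∀ (ν : Measure X) [IsFiniteMeasure ν], Integrable h ν := by
    intro ν _
    exact ⟨hmeas.aestronglyMeasurable,
      HasFiniteIntegral.of_bounded (C := C) (ae_of_all _ fun x => by simpa using hC x)⟩
  rw [Metric.tendsto_nhds]
  intro ε hε
  set δ : ℝ := ε / (3 * (2 * C + 1)) with hδdef
  have hden : (0:ℝ) < 3 * (2 * C + 1) := by positivity
  have hδ : 0 < δ := div_pos hε hden
  obtain ⟨G, hGopen, hGcont, hGμ, hGμlim⟩ := hquasi δ hδ
  -- Tietze extension of h from Gᶜ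
  have hclosed : IsClosed Gᶜ := hGopen.isClosed_compl
  have hcont : Continuous (Gᶜ.restrict h) := continuousOn_iff_continuous_restrict.1 hGcont
  obtain ⟨g, hgmem, hgeq⟩ := ContinuousMap.exists_restrict_eq_forall_mem_of_closed
    (Y := X) (s := Gᶜ) ⟨Gᶜ.restrict h, hcont⟩ (t := Set.Icc (-C) C)
    (fun x => by exact abs_le.1 (hC x)) ⟨C, by constructor <;> linarith⟩ hclosed
  have hgeq' : ∀ x ∉ G, g x = h x := by
    intro x hx
    have := congrFun (congrArg DFunLike.coe hgeq) ⟨x, hx⟩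
    exact this
  have hgabs : ∀ x, |g x| ≤ C := fun x => abs_le.2 (by simpa using hgmem x)
  have hdiff : ∀ x, |h x - g x| ≤ 2 * C := fun x => by
    have := abs_sub (h x) (g x)
    have h1 := hC x; have h2 := hgabs x
    calc |h x - g x| ≤ |h x| + |g x| := abs_sub _ _
      _ ≤ 2 * C := by linarith
  have hIntg : ∀ (ν : Measure X) [IsFiniteMeasure ν], Integrable g ν := by
    intro ν _
    exact ⟨g.continuous.measurable.aestronglyMeasurable,
      HasFiniteIntegral.of_bounded (C := C) (ae_of_all _ fun x => by simpa using hgabs x)⟩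
  have hbound : ∀ (ν : Measure X) [IsFiniteMeasure ν], ν G ≤ ENNReal.ofReal δ →
      |∫ x, h x ∂ν - ∫ x, g x ∂ν| ≤ ε / 3 := by
    intro ν _ hν
    have := key_integral_diff ν h g (hInth ν) (hIntg ν) G
      (fun x hx => (hgeq' x hx).symm) (2 * C) δ (by linarith) hdiff hδ.le hν
    refine this.trans ?_
    rw [show 2 * C * δ = 2 * C * ε / (3 * (2 * C + 1)) by rw [hδdef]; ring,
      div_le_div_iff₀ hden (by norm_num : (0:ℝ) < 3)]
    nlinarith [mul_nonneg hC0 hε.le]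
  have hglim := hweak g
  rw [Metric.tendsto_nhds] at hglim
  filter_upwards [hglim (ε / 3) (by linarith)] with j hj
  have h1 := hbound (μ j) (hGμ j)
  have h2 := hbound μlim hGμlim
  rw [Real.dist_eq] at hj ⊢
  have : |∫ x, h x ∂(μ j) - ∫ x, h x ∂μlim| ≤
      |∫ x, h x ∂(μ j) - ∫ x, g x ∂(μ j)| + |∫ x, g x ∂(μ j) - ∫ x, g x ∂μlim| +
      |∫ x, g x ∂μlim - ∫ x, h x ∂μlim| := by
    have := abs_sub_le (∫ x, h x ∂(μ j)) (∫ x, g x ∂(μ j)) (∫ x, h x ∂μlim)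
    have := abs_sub_le (∫ x, g x ∂(μ j)) (∫ x, g x ∂μlim) (∫ x, h x ∂μlim)
    linarith
  rw [abs_sub_comm (∫ x, g x ∂μlim)] at this
  linarith
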